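/- Let β>0, μ>1 and f, g ∈ E_{(β,μ)}. Then the convolution (f⋆g)(m) = (2π)^{−1/2} ∫_{−∞}^{∞} f(m−m₁)g(m₁) dm₁ is well-defined, belongs to E_{(β,μ)}, and there is a constant C = C(μ) > 0 (independent of f,g) with ‖f⋆g‖_{(β,μ)} ≤ C·‖f‖_{(β,μ)}·‖g‖_{(β,μ)}. -/

import Mathlib

/-- The weighted quantity `(1+|m|)^μ e^{β|m|} |f(m)|`. -/
noncomputable def Eweight (β μ : ℝ) (f : ℝ → ℂ) (m : ℝ) : ℝ :=
  (1 + |m|) ^ μ * Real.exp (β * |m|) * ‖f m‖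

/-- Membership in the space `E_{(β,μ)}`: continuous with finite weighted sup. -/
def MemE (β μ : ℝ) (f : ℝ → ℂ) : Prop :=
  Continuous f ∧ BddAbove (Set.range (Eweight β μ f))

/-- The norm `‖f‖_{(β,μ)} = sup_m (1+|m|)^μ e^{β|m|} |f(m)|`. -/
noncomputable def Enorm (β μ : ℝ) (f : ℝ → ℂ) : ℝ :=
  ⨆ m : ℝ, Eweight β μ f m

/-- The convolution `(f⋆g)(m) = (2π)^{−1/2} ∫ f(m−m₁) g(m₁) dm₁`. -/
noncomputable def Econv (f g : ℝ → ℂ) (m : ℝ) : ℂ :=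
  ((2 * Real.pi) ^ (-(1 : ℝ) / 2) : ℝ) * ∫ m₁ : ℝ, f (m - m₁) * g m₁

open MeasureTheory Real Set

namespace EconvAux

/-- The weight function `w x = (1+|x|)^{-μ}`. -/
noncomputable def w (μ x : ℝ) : ℝ := (1 + |x|) ^ (-μ)

lemma w_pos (μ x : ℝ) : 0 < w μ x := by unfold w; positivity

lemma w_cont (μ : ℝ) : Continuous (w μ) := by
  apply Continuous.rpow_const (continuous_const.add continuous_abs)
  intro x; left; exact (by positivity : (0:ℝ) < 1 + |x|).ne'

lemma w_le_one {μ : ℝ} (hμ : 0 ≤ μ) (x : ℝ) : w μ x ≤ 1 :=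
  Real.rpow_le_one_of_one_le_of_nonpos (by simpa using abs_nonneg x) (by linarith)

lemma w_int {μ : ℝ} (hμ : 1 < μ) : Integrable (w μ) := by
  have h := integrable_one_add_norm (E := ℝ) (μ := volume) (r := μ) (by simpa using hμ)
  simp only [Real.norm_eq_abs] at h
  exact h

lemma w_prod_int {μ : ℝ} (hμ : 1 < μ) (m : ℝ) :
    Integrable (fun t : ℝ => w μ (m - t) * w μ t) := by
  apply (w_int hμ).mono'
  · exact (((w_cont μ).comp (continuous_const.sub continuous_id)).mul
      (w_cont μ)).aestronglyMeasurable
  · filter_upwards with t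
    rw [Real.norm_eq_abs, abs_of_nonneg (mul_nonneg (w_pos μ (m-t)).le (w_pos μ t).le)]
    have h1 := w_le_one (le_of_lt (lt_trans one_pos hμ)) (m - t)
    have h2 := (w_pos μ t).le
    nlinarith

lemma w_key {μ : ℝ} (hμ : 0 < μ) (m t : ℝ) :
    w μ (m - t) * w μ t ≤ 2 ^ μ * w μ m * (w μ (m - t) + w μ t) := by
  have htri : |m| ≤ |m - t| + |t| := by
    calc |m| = |(m - t) + t| := by ring_nf
    _ ≤ |m - t| + |t| := abs_add_le _ _
  have key : ∀ s : ℝ, |m| / 2 ≤ |s| → w μ s ≤ 2 ^ μ * w μ m := by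
    intro s hs
    have h1 : (1 + |m|) / 2 ≤ 1 + |s| := by
      have := abs_nonneg m; linarith
    calc w μ s ≤ ((1 + |m|) / 2) ^ (-μ) :=
          Real.rpow_le_rpow_of_nonpos (by positivity) h1 (by linarith)
      _ = 2 ^ μ * w μ m := by
          rw [Real.div_rpow (by positivity) (by norm_num),
            Real.rpow_neg (by norm_num : (0:ℝ) ≤ 2), div_eq_mul_inv, inv_inv, mul_comm]
          rfl
  have habs : |m| / 2 ≤ |t| ∨ |m| / 2 ≤ |m - t| := by
    rcases le_or_gt (|m| / 2) |t| with h | h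
    · exact Or.inl h
    · exact Or.inr (by linarith)
  have h1 := (w_pos μ (m - t)).le
  have h2 := (w_pos μ t).le
  have h3 : (0:ℝ) ≤ 2 ^ μ * w μ m :=
    mul_nonneg (Real.rpow_nonneg (by norm_num) μ) (w_pos μ m).le
  rcases habs with h | h
  · have hk := key t h
    nlinarith [mul_le_mul_of_nonneg_left hk h1]
  · have hk := key (m - t) h
    nlinarith [mul_le_mul_of_nonneg_right hk h2]

lemma conv_w_bound {μ : ℝ} (hμ : 1 < μ) (m : ℝ) :
    ∫ t : ℝ, w μ (m - t) * w μ t ≤ 2 ^ μ * w μ m * (2 * ∫ t : ℝ, w μ t) := by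
  have hw := w_int hμ
  have hwm : Integrable (fun t : ℝ => w μ (m - t)) := hw.comp_sub_left m
  calc ∫ t : ℝ, w μ (m - t) * w μ t
      ≤ ∫ t : ℝ, 2 ^ μ * w μ m * (w μ (m - t) + w μ t) :=
        integral_mono (w_prod_int hμ m) ((hwm.add hw).const_mul _)
          (fun t => w_key (by linarith) m t)
    _ = 2 ^ μ * w μ m * (2 * ∫ t : ℝ, w μ t) := by
        rw [integral_const_mul, integral_add hwm hw,
          integral_sub_left_eq_self (w μ) volume m]
        ring

lemma Eweight_nonneg (β μ : ℝ) (f : ℝ → ℂ) (m : ℝ) : 0 ≤ Eweight β μ f m := by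
  unfold Eweight; positivity

lemma Enorm_nonneg {β μ : ℝ} {f : ℝ → ℂ} (hf : MemE β μ f) : 0 ≤ Enorm β μ f :=
  le_trans (Eweight_nonneg β μ f 0) (le_ciSup hf.2 0)

lemma point_bound {β μ : ℝ} {f : ℝ → ℂ} (hf : MemE β μ f) (x : ℝ) :
    ‖f x‖ ≤ Enorm β μ f * w μ x * Real.exp (-(β * |x|)) := by
  have h : Eweight β μ f x ≤ Enorm β μ f := le_ciSup hf.2 x
  unfold Eweight at h
  have hA : (0:ℝ) < (1 + |x|) ^ μ := by positivity
  have hB : (0:ℝ) < Real.exp (β * |x|) := Real.exp_pos _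
  rw [show w μ x = ((1 + |x|) ^ μ)⁻¹ by rw [w, Real.rpow_neg (by positivity)],
    Real.exp_neg]
  calc ‖f x‖
      = (1 + |x|) ^ μ * Real.exp (β * |x|) * ‖f x‖ *
          ((1 + |x|) ^ μ)⁻¹ * (Real.exp (β * |x|))⁻¹ := by
        field_simp
    _ ≤ Enorm β μ f * ((1 + |x|) ^ μ)⁻¹ * (Real.exp (β * |x|))⁻¹ := by
        gcongr

lemma integrand_bound {β μ : ℝ} (hβ : 0 < β) {f g : ℝ → ℂ}
    (hf : MemE β μ f) (hg : MemE β μ g) (m t : ℝ) :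
    ‖f (m - t) * g t‖ ≤
      Enorm β μ f * Enorm β μ g * Real.exp (-(β * |m|)) * (w μ (m - t) * w μ t) := by
  rw [norm_mul]
  have h1 := point_bound hf (m - t)
  have h2 := point_bound hg t
  have hNf := Enorm_nonneg hf
  have hNg := Enorm_nonneg hg
  have hexp : Real.exp (-(β * |m - t|)) * Real.exp (-(β * |t|)) ≤
      Real.exp (-(β * |m|)) := by
    rw [← Real.exp_add]
    apply Real.exp_le_exp.mpr
    have htri : |m| ≤ |m - t| + |t| := by
      calc |m| = |(m - t) + t| := by ring_nf
      _ ≤ |m - t| + |t| := abs_add_le _ _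
    nlinarith
  have hw1 := (w_pos μ (m - t)).le
  have hw2 := (w_pos μ t).le
  calc ‖f (m - t)‖ * ‖g t‖
      ≤ (Enorm β μ f * w μ (m - t) * Real.exp (-(β * |m - t|))) *
        (Enorm β μ g * w μ t * Real.exp (-(β * |t|))) :=
        mul_le_mul h1 h2 (norm_nonneg _)
          (mul_nonneg (mul_nonneg hNf hw1) (Real.exp_pos _).le)
    _ = (Enorm β μ f * Enorm β μ g) *
          (Real.exp (-(β * |m - t|)) * Real.exp (-(β * |t|))) *
          (w μ (m - t) * w μ t) := by ring
    _ ≤ (Enorm β μ f * Enorm β μ g) * Real.exp (-(β * |m|)) *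
          (w μ (m - t) * w μ t) :=
        mul_le_mul_of_nonneg_right
          (mul_le_mul_of_nonneg_left hexp (mul_nonneg hNf hNg))
          (mul_nonneg hw1 hw2)

lemma conv_integrand_integrable {β μ : ℝ} (hβ : 0 < β) (hμ : 1 < μ) {f g : ℝ → ℂ}
    (hf : MemE β μ f) (hg : MemE β μ g) (m : ℝ) :
    Integrable (fun t : ℝ => f (m - t) * g t) := by
  have hNf := Enorm_nonneg hf
  have hNg := Enorm_nonneg hg
  apply ((w_int hμ).const_mul (Enorm β μ f * Enorm β μ g)).mono'
  · exact ((hf.1.comp (continuous_const.sub continuous_id)).mul hg.1).aestronglyMeasurable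
  · filter_upwards with t
    have h := integrand_bound hβ hf hg m t
    have he : Real.exp (-(β * |m|)) ≤ 1 :=
      Real.exp_le_one_iff.mpr (neg_nonpos.mpr (by positivity))
    have hw1 := w_le_one (le_of_lt (lt_trans one_pos hμ)) (m - t)
    have hw1' := (w_pos μ (m - t)).le
    have hw2 := (w_pos μ t).le
    have hee := (Real.exp_pos (-(β * |m|))).le
    have hkey : Real.exp (-(β * |m|)) * (w μ (m - t) * w μ t) ≤ w μ t := by
      nlinarith [mul_le_mul_of_nonneg_right he (mul_nonneg hw1' hw2),
        mul_le_mul_of_nonneg_right hw1 hw2]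
    calc ‖f (m - t) * g t‖
        ≤ Enorm β μ f * Enorm β μ g * Real.exp (-(β * |m|)) *
            (w μ (m - t) * w μ t) := h
      _ = (Enorm β μ f * Enorm β μ g) *
            (Real.exp (-(β * |m|)) * (w μ (m - t) * w μ t)) := by ring
      _ ≤ Enorm β μ f * Enorm β μ g * w μ t :=
          mul_le_mul_of_nonneg_left hkey (mul_nonneg hNf hNg)

lemma integral_bound {β μ : ℝ} (hβ : 0 < β) (hμ : 1 < μ) {f g : ℝ → ℂ}
    (hf : MemE β μ f) (hg : MemE β μ g) (m : ℝ) :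
    ‖∫ t : ℝ, f (m - t) * g t‖ ≤
      Enorm β μ f * Enorm β μ g * Real.exp (-(β * |m|)) *
        (2 ^ μ * w μ m * (2 * ∫ t : ℝ, w μ t)) := by
  have hNf := Enorm_nonneg hf
  have hNg := Enorm_nonneg hg
  have hK : (0:ℝ) ≤ Enorm β μ f * Enorm β μ g * Real.exp (-(β * |m|)) := by positivity
  calc ‖∫ t : ℝ, f (m - t) * g t‖
      ≤ ∫ t : ℝ, ‖f (m - t) * g t‖ := by
        simpa using
          norm_integral_le_integral_norm (fun t : ℝ => f (m - t) * g t)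
    _ ≤ ∫ t : ℝ, Enorm β μ f * Enorm β μ g * Real.exp (-(β * |m|)) *
          (w μ (m - t) * w μ t) := by
        apply integral_mono ((conv_integrand_integrable hβ hμ hf hg m).norm)
          ((w_prod_int hμ m).const_mul _)
        intro t
        simpa using integrand_bound hβ hf hg m t
    _ = Enorm β μ f * Enorm β μ g * Real.exp (-(β * |m|)) *
          ∫ t : ℝ, w μ (m - t) * w μ t := integral_const_mul _ _
    _ ≤ Enorm β μ f * Enorm β μ g * Real.exp (-(β * |m|)) *
          (2 ^ μ * w μ m * (2 * ∫ t : ℝ, w μ t)) :=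
        mul_le_mul_of_nonneg_left (conv_w_bound hμ m) hK

lemma Eweight_conv_bound {β μ : ℝ} (hβ : 0 < β) (hμ : 1 < μ) {f g : ℝ → ℂ}
    (hf : MemE β μ f) (hg : MemE β μ g) (m : ℝ) :
    Eweight β μ (Econv f g) m ≤
      ((2 * Real.pi) ^ (-(1 : ℝ) / 2) * (2 ^ μ * (2 * ∫ t : ℝ, w μ t))) *
        Enorm β μ f * Enorm β μ g := by
  set c : ℝ := (2 * Real.pi) ^ (-(1 : ℝ) / 2) with hc_def
  have hc : (0:ℝ) ≤ c := by positivity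
  have h := integral_bound hβ hμ hf hg m
  calc Eweight β μ (Econv f g) m
      = (1 + |m|) ^ μ * Real.exp (β * |m|) *
          (c * ‖∫ t : ℝ, f (m - t) * g t‖) := by
        unfold Eweight Econv
        rw [norm_mul, Complex.norm_of_nonneg hc]
    _ ≤ (1 + |m|) ^ μ * Real.exp (β * |m|) *
          (c * (Enorm β μ f * Enorm β μ g * Real.exp (-(β * |m|)) *
            (2 ^ μ * w μ m * (2 * ∫ t : ℝ, w μ t)))) := by
        exact mul_le_mul_of_nonneg_left
          (mul_le_mul_of_nonneg_left h hc) (by positivity)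
    _ = (c * (2 ^ μ * (2 * ∫ t : ℝ, w μ t))) * Enorm β μ f * Enorm β μ g *
          (((1 + |m|) ^ μ * w μ m) * (Real.exp (β * |m|) * Real.exp (-(β * |m|)))) := by
        ring
    _ = (c * (2 ^ μ * (2 * ∫ t : ℝ, w μ t))) * Enorm β μ f * Enorm β μ g := by
        rw [show (1 + |m|) ^ μ * w μ m = 1 by
            rw [w, ← Real.rpow_add (by positivity)]; simp,
          ← Real.exp_add]
        simp

end EconvAux

/-- for `f, g ∈ E_{(β,μ)}` (β>0, μ>1) the convolution is well defined,
belongs to `E_{(β,μ)}`, and `‖f⋆g‖ ≤ C ‖f‖ ‖g‖` for a constant `C = C(μ)` independent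
of `f` and `g`. -/
theorem Econv_bound (β μ : ℝ) (hβ : 0 < β) (hμ : 1 < μ) :
    ∃ C : ℝ, 0 < C ∧ ∀ f g : ℝ → ℂ, MemE β μ f → MemE β μ g →
      (∀ m : ℝ, MeasureTheory.Integrable (fun m₁ : ℝ => f (m - m₁) * g m₁)) ∧
      MemE β μ (Econv f g) ∧
      Enorm β μ (Econv f g) ≤ C * Enorm β μ f * Enorm β μ g := by
  classical
  set c : ℝ := (2 * Real.pi) ^ (-(1 : ℝ) / 2) with hc_def
  set I : ℝ := ∫ t : ℝ, EconvAux.w μ t with hI_def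
  have hI : 0 ≤ I := MeasureTheory.integral_nonneg fun t => (EconvAux.w_pos μ t).le
  have hc : (0:ℝ) ≤ c := by positivity
  set D : ℝ := c * (2 ^ μ * (2 * I)) with hD_def
  have hD : 0 ≤ D :=
    mul_nonneg hc (mul_nonneg (Real.rpow_nonneg (by norm_num) μ)
      (by linarith))
  refine ⟨D + 1, by linarith, fun f g hf hg => ?_⟩
  have hNf := EconvAux.Enorm_nonneg hf
  have hNg := EconvAux.Enorm_nonneg hg
  have hint := fun m => EconvAux.conv_integrand_integrable hβ hμ hf hg m
  have hwb := fun m => EconvAux.Eweight_conv_bound hβ hμ hf hg m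
  -- continuity of the convolution
  have hgint : MeasureTheory.Integrable g := by
    apply ((EconvAux.w_int hμ).const_mul (Enorm β μ g)).mono' hg.1.aestronglyMeasurable
    filter_upwards with t
    have h := EconvAux.point_bound hg t
    have he : Real.exp (-(β * |t|)) ≤ 1 :=
      Real.exp_le_one_iff.mpr (neg_nonpos.mpr (by positivity))
    have hw := (EconvAux.w_pos μ t).le
    have hee := (Real.exp_pos (-(β * |t|))).le
    have hNg := EconvAux.Enorm_nonneg hg
    nlinarith [mul_le_mul_of_nonneg_left he (mul_nonneg hNg hw)]
  have hbf : BddAbove (Set.range fun x => ‖f x‖) := by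
    refine ⟨Enorm β μ f, ?_⟩
    rintro _ ⟨x, rfl⟩
    have h := EconvAux.point_bound hf x
    have he : Real.exp (-(β * |x|)) ≤ 1 :=
      Real.exp_le_one_iff.mpr (neg_nonpos.mpr (by positivity))
    have hw1 := EconvAux.w_le_one (le_of_lt (lt_trans one_pos hμ)) x
    have hw := (EconvAux.w_pos μ x).le
    have hee := (Real.exp_pos (-(β * |x|))).le
    nlinarith [mul_le_mul_of_nonneg_left he (mul_nonneg hNf hw),
      mul_le_mul_of_nonneg_left hw1 hNf]
  have hconv : Continuous
      (MeasureTheory.convolution g f (ContinuousLinearMap.mul ℂ ℂ) MeasureTheory.volume) :=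
    hbf.continuous_convolution_right_of_integrable _ hgint hf.1
  have hEconv_eq : Econv f g = fun m =>
      ((c : ℝ) : ℂ) *
        MeasureTheory.convolution g f (ContinuousLinearMap.mul ℂ ℂ) MeasureTheory.volume m := by
    funext m
    unfold Econv
    rw [MeasureTheory.convolution_def, hc_def]
    congr 1
    exact MeasureTheory.integral_congr_ae
      (Filter.Eventually.of_forall fun t => by simp [mul_comm])
  have hcontconv : Continuous (Econv f g) := by
    rw [hEconv_eq]; exact continuous_const.mul hconv
  refine ⟨hint, ⟨hcontconv, ⟨D * Enorm β μ f * Enorm β μ g, ?_⟩⟩, ?_⟩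
  · rintro _ ⟨m, rfl⟩
    exact hwb m
  · apply ciSup_le fun m => ?_
    calc Eweight β μ (Econv f g) m ≤ D * Enorm β μ f * Enorm β μ g := hwb m
      _ ≤ (D + 1) * Enorm β μ f * Enorm β μ g := by nlinarith
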